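/- arXiv:2310.08486 — 5 statements merged into one kernel-verified Lean document; each statement's English description precedes it below -/
import Mathlib

section
/- Every graph with maximum degree at most 3 admits a partition of its vertex set into two parts V1, V2 such that every vertex in the subgraph induced by V1 has degree at most 1 in that subgraph, and every vertex in the subgraph induced by V2 has degree at most 1 in that subgraph. -/
open Finset

/-- Every graph with maximum degree at most 3 admits a (1,1)-coloring:
a partition of vertices into two parts each inducing a subgraph of max degree ≤ 1. -/
theorem stmt0 {V : Type*} [Fintype V] (G : SimpleGraph V) [DecidableRel G.Adj]
    (h : ∀ v, G.degree v ≤ 3) :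
    ∃ f : V → Bool, ∀ v,
      ((G.neighborFinset v).filter (fun u => f u = f v)).card ≤ 1 := by
  classical
  let t : (V → Bool) → V → ℕ :=
    fun f v => ((G.neighborFinset v).filter (fun u => f u = f v)).card
  obtain ⟨f, -, hf⟩ := Finset.exists_min_image (Finset.univ : Finset (V → Bool))
    (fun f => ∑ v, t f v) ⟨fun _ => true, Finset.mem_univ _⟩
  refine ⟨f, fun v => ?_⟩
  by_contra hc
  push_neg at hc
  have hc' : 2 ≤ t f v := hc
  set g := Function.update f v (!f v) with hg
  have hgv : g v = !f v := Function.update_self _ _ _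
  have hgu : ∀ u, u ≠ v → g u = f u := fun u hu => Function.update_of_ne hu _ _
  set k := t f v with hk
  set d := G.degree v with hd
  have htv : t f v = ((G.neighborFinset v).filter (fun u => f u = f v)).card := rfl
  -- Fact A : t g v + k = d
  have factA : t g v + k = d := by
    have hfilt : (G.neighborFinset v).filter (fun u => g u = g v)
        = (G.neighborFinset v).filter (fun u => ¬ (f u = f v)) := by
      ext w
      simp only [Finset.mem_filter, SimpleGraph.mem_neighborFinset]
      refine and_congr_right fun hw => ?_
      rw [hgu w (G.ne_of_adj hw).symm, hgv]
      cases hb : f w <;> cases hb' : f v <;> simp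
    have h3 := Finset.card_filter_add_card_filter_not
      (s := G.neighborFinset v) (p := fun u => f u = f v)
    rw [SimpleGraph.card_neighborFinset_eq_degree] at h3
    have htgv : t g v = ((G.neighborFinset v).filter (fun u => ¬ (f u = f v))).card := by
      simp only [t, hfilt]
    omega
  -- Fact B : same-colored neighbors lose one
  have factB : ∀ u, G.Adj v u → f u = f v → t g u + 1 = t f u := by
    intro u hadj hfu
    have huv : u ≠ v := (G.ne_of_adj hadj).symm
    have hvmem : v ∈ (G.neighborFinset u).filter (fun w => f w = f u) := by
      simp [SimpleGraph.mem_neighborFinset, hadj.symm, hfu.symm]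
    have hfilt : (G.neighborFinset u).filter (fun w => g w = g u)
        = ((G.neighborFinset u).filter (fun w => f w = f u)).erase v := by
      ext w
      simp only [Finset.mem_filter, Finset.mem_erase, SimpleGraph.mem_neighborFinset]
      rcases eq_or_ne w v with hwv | hwv
      · simp only [hwv, hgv, hgu u huv]
        constructor
        · rintro ⟨-, hw2⟩
          rw [hfu] at hw2
          simp at hw2
        · rintro ⟨hne, -⟩
          exact absurd rfl hne
      · rw [hgu w hwv, hgu u huv]
        tauto
    have h1 : 1 ≤ ((G.neighborFinset u).filter (fun w => f w = f u)).card :=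
      Finset.card_pos.mpr ⟨v, hvmem⟩
    have h2 := Finset.card_erase_of_mem hvmem
    have e1 : t g u = (((G.neighborFinset u).filter (fun w => f w = f u)).erase v).card := by
      simp only [t, hfilt]
    have e2 : t f u = ((G.neighborFinset u).filter (fun w => f w = f u)).card := rfl
    omega
  -- Fact C : differently-colored neighbors gain one
  have factC : ∀ u, G.Adj v u → f u ≠ f v → t g u = t f u + 1 := by
    intro u hadj hfu
    have huv : u ≠ v := (G.ne_of_adj hadj).symm
    have hvnmem : v ∉ (G.neighborFinset u).filter (fun w => f w = f u) := by
      simp only [Finset.mem_filter, SimpleGraph.mem_neighborFinset]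
      rintro ⟨-, hw⟩
      exact hfu hw.symm
    have hfilt : (G.neighborFinset u).filter (fun w => g w = g u)
        = insert v ((G.neighborFinset u).filter (fun w => f w = f u)) := by
      ext w
      simp only [Finset.mem_filter, Finset.mem_insert, SimpleGraph.mem_neighborFinset]
      rcases eq_or_ne w v with hwv | hwv
      · simp only [hwv, hgv, hgu u huv]
        constructor
        · intro _
          exact Or.inl trivial
        · intro _
          refine ⟨hadj.symm, ?_⟩
          cases hb : f u <;> cases hb' : f v <;> simp_all
      · rw [hgu w hwv, hgu u huv]
        tauto
    have e1 : t g u = (insert v ((G.neighborFinset u).filter (fun w => f w = f u))).card := by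
      simp only [t, hfilt]
    rw [Finset.card_insert_of_notMem hvnmem] at e1
    exact e1
  -- Fact D : non-neighbors keep their count
  have factD : ∀ u, u ≠ v → ¬ G.Adj v u → t g u = t f u := by
    intro u huv hadj
    have hfilt : (G.neighborFinset u).filter (fun w => g w = g u)
        = (G.neighborFinset u).filter (fun w => f w = f u) := by
      ext w
      simp only [Finset.mem_filter, SimpleGraph.mem_neighborFinset]
      constructor <;> rintro ⟨hw, hw2⟩ <;> refine ⟨hw, ?_⟩ <;>
        have hwv : w ≠ v := by rintro rfl; exact hadj hw.symm
      · rwa [hgu w hwv, hgu u huv] at hw2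
      · rwa [hgu w hwv, hgu u huv]
    simp only [t, hfilt]
  -- pointwise integer identity
  set c : V → ℤ := fun u =>
    if u = v then (d : ℤ) - 2 * k
    else if G.Adj v u then (if f u = f v then -1 else 1) else 0 with hcdef
  have hpt : ∀ u, (t g u : ℤ) = t f u + c u := by
    intro u
    rcases eq_or_ne u v with rfl | huv
    · simp only [hcdef, if_pos rfl]
      omega
    · by_cases hadj : G.Adj v u
      · by_cases hfu : f u = f v
        · have := factB u hadj hfu
          simp only [hcdef, if_neg huv, if_pos hadj, if_pos hfu]
          omega
        · have := factC u hadj hfu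
          simp only [hcdef, if_neg huv, if_pos hadj, if_neg hfu]
          omega
      · have := factD u huv hadj
        simp only [hcdef, if_neg huv, if_neg hadj]
        omega
  -- sum of corrections
  have hsumc : ∑ u, c u = 2 * (d : ℤ) - 4 * k := by
    rw [← Finset.sum_erase_add _ _ (Finset.mem_univ v)]
    have h1 : ∑ u ∈ Finset.univ.erase v, c u = ∑ u ∈ G.neighborFinset v, c u := by
      refine (Finset.sum_subset ?_ ?_).symm
      · intro u hu
        rw [SimpleGraph.mem_neighborFinset] at hu
        exact Finset.mem_erase.2 ⟨(G.ne_of_adj hu).symm, Finset.mem_univ _⟩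
      · intro u hu hnu
        have huv : u ≠ v := (Finset.mem_erase.1 hu).1
        have hna : ¬ G.Adj v u := fun ha => hnu (by rwa [SimpleGraph.mem_neighborFinset])
        simp [hcdef, huv, hna]
    have h1' : ∑ u ∈ G.neighborFinset v, c u
        = ∑ u ∈ G.neighborFinset v, (if f u = f v then (-1 : ℤ) else 1) := by
      refine Finset.sum_congr rfl fun u hu => ?_
      rw [SimpleGraph.mem_neighborFinset] at hu
      have huv : u ≠ v := (G.ne_of_adj hu).symm
      simp [hcdef, huv, hu]
    have h2 : ∑ u ∈ G.neighborFinset v, (if f u = f v then (-1 : ℤ) else 1)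
        = -(k : ℤ) + ((d : ℤ) - k) := by
      rw [Finset.sum_ite, Finset.sum_const, Finset.sum_const]
      have h3 := Finset.card_filter_add_card_filter_not
        (s := G.neighborFinset v) (p := fun u => f u = f v)
      rw [SimpleGraph.card_neighborFinset_eq_degree] at h3
      simp only [nsmul_eq_mul, mul_one, mul_neg_one]
      omega
    rw [h1, h1', h2]
    simp only [hcdef, if_pos rfl]
    ring
  have hmg : (∑ u, t g u : ℤ) = (∑ u, t f u : ℤ) + (2 * (d : ℤ) - 4 * k) := by
    rw [← hsumc, ← Finset.sum_add_distrib]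
    exact Finset.sum_congr rfl (fun u _ => hpt u)
  have hdle : d ≤ 3 := h v
  have hlt : (∑ u, t g u) < (∑ u, t f u) := by
    have hz : (∑ u, t g u : ℤ) < (∑ u, t f u : ℤ) := by
      rw [hmg]
      have hk2 : (2 : ℤ) ≤ k := by exact_mod_cast hc'
      have hd3 : (d : ℤ) ≤ 3 := by exact_mod_cast hdle
      omega
    exact_mod_cast hz
  exact absurd (hf g (Finset.mem_univ g)) (not_le.mpr hlt)
end

section
/- If a graph G has maximum degree D and nonnegative integers d1,...,dk satisfy (d1+1)+(d2+1)+...+(dk+1) >= D+1, then V(G) can be partitioned into sets V1,...,Vk such that for each i, every vertex in Vi has at most di neighbors inside Vi. -/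
/-- Lovász's theorem on defective colorings. -/
theorem stmt1 {V : Type*} [Fintype V] (G : SimpleGraph V) [DecidableRel G.Adj]
    (D k : ℕ) (d : Fin k → ℕ)
    (hD : ∀ v, G.degree v ≤ D)
    (hsum : D + 1 ≤ ∑ i, (d i + 1)) :
    ∃ f : V → Fin k, ∀ v,
      ((G.neighborFinset v).filter (fun u => f u = f v)).card ≤ d (f v) := by
  classical
  rcases Nat.eq_zero_or_pos k with hk | hk
  · subst hk; simp at hsum
  have hne : Nonempty (Fin k) := ⟨⟨0, hk⟩⟩
  set N : ℕ := ∏ i, (d i + 1) with hNdef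
  have hNpos : 0 < N := Finset.prod_pos fun i _ => Nat.succ_pos _
  have hdvd : ∀ i : Fin k, (d i + 1) ∣ N := fun i => Finset.dvd_prod_of_mem _ (Finset.mem_univ i)
  set w : Fin k → ℕ := fun i => N / (d i + 1) with hwdef
  have hw : ∀ i, w i * (d i + 1) = N := fun i => Nat.div_mul_cancel (hdvd i)
  have hwpos : ∀ i, 0 < w i := by
    intro i
    rcases Nat.eq_zero_or_pos (w i) with h | h
    · exfalso; have := hw i; rw [h, zero_mul] at this; omega
    · exact h
  set P : Finset (V × V) := Finset.univ.filter (fun p : V × V => G.Adj p.1 p.2) with hPdef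
  set Φ : (V → Fin k) → ℕ :=
    fun f => ∑ p ∈ P, if f p.1 = f p.2 then w (f p.1) else 0 with hΦdef
  obtain ⟨f, -, hf⟩ := Finset.exists_min_image (Finset.univ : Finset (V → Fin k)) Φ
    Finset.univ_nonempty
  refine ⟨f, fun v => ?_⟩
  by_contra hbad
  push_neg at hbad
  -- find a color j with few neighbors colored j
  have hsumdeg : ∑ j : Fin k, ((G.neighborFinset v).filter (fun u => f u = j)).card
      = G.degree v := by
    rw [← SimpleGraph.card_neighborFinset_eq_degree]
    exact (Finset.card_eq_sum_card_fiberwise (fun u _ => Finset.mem_univ (f u))).symm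
  have hexj : ∃ j, ((G.neighborFinset v).filter (fun u => f u = j)).card ≤ d j := by
    by_contra h
    push_neg at h
    have h1 : ∑ j : Fin k, (d j + 1)
        ≤ ∑ j : Fin k, ((G.neighborFinset v).filter (fun u => f u = j)).card :=
      Finset.sum_le_sum fun j _ => h j
    rw [hsumdeg] at h1
    have h2 := hD v
    have : D + 1 ≤ D := hsum.trans (h1.trans h2)
    omega
  obtain ⟨j, hj⟩ := hexj
  set i : Fin k := f v with hidef
  set f' : V → Fin k := Function.update f v j with hf'def
  have hfu : ∀ u ∈ G.neighborFinset v, f' u = f u := by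
    intro u hu
    have hadj : G.Adj v u := by simpa using hu
    exact Function.update_of_ne (G.ne_of_adj hadj).symm _ _
  have hfv : f' v = j := Function.update_self _ _ _
  -- decompose Φ
  have hsplit : ∀ g : V → Fin k,
      Φ g = (∑ p ∈ P.filter (fun p => p.1 = v ∨ p.2 = v),
              if g p.1 = g p.2 then w (g p.1) else 0)
          + ∑ p ∈ P.filter (fun p => ¬(p.1 = v ∨ p.2 = v)),
              if g p.1 = g p.2 then w (g p.1) else 0 := fun g =>
    (Finset.sum_filter_add_sum_filter_not P _ _).symm
  have hrest : (∑ p ∈ P.filter (fun p => ¬(p.1 = v ∨ p.2 = v)),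
        if f' p.1 = f' p.2 then w (f' p.1) else 0)
      = ∑ p ∈ P.filter (fun p => ¬(p.1 = v ∨ p.2 = v)),
        if f p.1 = f p.2 then w (f p.1) else 0 := by
    refine Finset.sum_congr rfl fun p hp => ?_
    obtain ⟨-, hp2⟩ := Finset.mem_filter.mp hp
    push_neg at hp2
    rw [hf'def, Function.update_of_ne hp2.1, Function.update_of_ne hp2.2]
  -- pairs through v
  have himg1 : P.filter (fun p => p.1 = v) = (G.neighborFinset v).image (fun u => (v, u)) := by
    ext ⟨a, b⟩
    simp only [Finset.mem_filter, Finset.mem_image, hPdef, Finset.mem_univ, true_and,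
      SimpleGraph.mem_neighborFinset, Prod.mk.injEq]
    constructor
    · rintro ⟨hab, rfl⟩; exact ⟨b, hab, rfl, rfl⟩
    · rintro ⟨u, hu, rfl, rfl⟩; exact ⟨hu, rfl⟩
  have himg2 : P.filter (fun p => p.2 = v) = (G.neighborFinset v).image (fun u => (u, v)) := by
    ext ⟨a, b⟩
    simp only [Finset.mem_filter, Finset.mem_image, hPdef, Finset.mem_univ, true_and,
      SimpleGraph.mem_neighborFinset, Prod.mk.injEq]
    constructor
    · rintro ⟨hab, rfl⟩; exact ⟨a, hab.symm, rfl, rfl⟩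
    · rintro ⟨u, hu, rfl, rfl⟩; exact ⟨hu.symm, rfl⟩
  have hdisj : Disjoint (P.filter (fun p => p.1 = v)) (P.filter (fun p => p.2 = v)) := by
    rw [Finset.disjoint_left]
    rintro ⟨a, b⟩ h1 h2
    obtain ⟨hP1, h1'⟩ := Finset.mem_filter.mp h1
    obtain ⟨-, h2'⟩ := Finset.mem_filter.mp h2
    have hadj : G.Adj a b := by simpa [hPdef] using hP1
    rw [show a = v from h1', show b = v from h2'] at hadj
    exact G.loopless.irrefl v hadj
  have hvsum : ∀ g : V → Fin k,
      (∑ p ∈ P.filter (fun p => p.1 = v ∨ p.2 = v),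
        if g p.1 = g p.2 then w (g p.1) else 0)
      = (∑ u ∈ G.neighborFinset v, if g v = g u then w (g v) else 0)
      + ∑ u ∈ G.neighborFinset v, if g u = g v then w (g u) else 0 := by
    intro g
    rw [Finset.filter_or, Finset.sum_union hdisj, himg1, himg2,
      Finset.sum_image (fun a _ b _ h => (Prod.mk.injEq _ _ _ _ ▸ h).2),
      Finset.sum_image (fun a _ b _ h => (Prod.mk.injEq _ _ _ _ ▸ h).1)]
  -- evaluate sums for f
  have hA : ∀ g : V → Fin k, ∀ c : Fin k,
      (∑ u ∈ G.neighborFinset v, if g u = c then w (g u) else 0)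
      = ((G.neighborFinset v).filter (fun u => g u = c)).card * w c := by
    intro g c
    rw [← Finset.sum_filter]
    rw [Finset.sum_congr rfl (fun u hu => by
      rw [(Finset.mem_filter.mp hu).2])]
    rw [Finset.sum_const, smul_eq_mul]
  have hA' : ∀ g : V → Fin k, ∀ c : Fin k,
      (∑ u ∈ G.neighborFinset v, if c = g u then w c else 0)
      = ((G.neighborFinset v).filter (fun u => g u = c)).card * w c := by
    intro g c
    rw [← hA g c]
    refine Finset.sum_congr rfl fun u hu => ?_
    by_cases h : g u = c
    · simp [h]
    · rw [if_neg h, if_neg (fun hh => h hh.symm)]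
  set A : ℕ := ((G.neighborFinset v).filter (fun u => f u = i)).card with hAdef
  set B : ℕ := ((G.neighborFinset v).filter (fun u => f u = j)).card with hBdef
  have hΦf : Φ f = 2 * (A * w i)
      + ∑ p ∈ P.filter (fun p => ¬(p.1 = v ∨ p.2 = v)),
          if f p.1 = f p.2 then w (f p.1) else 0 := by
    rw [hsplit f, hvsum f, hA f i, ← hidef, hA' f (f v), ← hidef]
    ring
  have hΦf' : Φ f' = 2 * (B * w j)
      + ∑ p ∈ P.filter (fun p => ¬(p.1 = v ∨ p.2 = v)),
          if f p.1 = f p.2 then w (f p.1) else 0 := by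
    rw [hsplit f', hvsum f', hrest, hfv]
    have e1 : (∑ u ∈ G.neighborFinset v, if j = f' u then w j else 0)
        = B * w j := by
      rw [← hA' f j]
      exact Finset.sum_congr rfl fun u hu => by rw [hfu u hu]
    have e2 : (∑ u ∈ G.neighborFinset v, if f' u = j then w (f' u) else 0)
        = B * w j := by
      rw [← hA f j]
      exact Finset.sum_congr rfl fun u hu => by rw [hfu u hu]
    rw [e1, e2]
    ring
  -- final inequality
  have hkey : B * w j < A * w i := by
    have h1 : B * w j ≤ d j * w j := Nat.mul_le_mul_right _ hj
    have h2 : d j * w j < (d j + 1) * w j :=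
      (Nat.mul_lt_mul_right (hwpos j)).mpr (Nat.lt_succ_self _)
    have h3 : (d j + 1) * w j = N := by rw [mul_comm]; exact hw j
    have h4 : N ≤ A * w i := by
      have : (d i + 1) * w i ≤ A * w i := Nat.mul_le_mul_right _ hbad
      rw [mul_comm] at this
      rw [← hw i]
      linarith [this]
    omega
  have hlt : Φ f' < Φ f := by rw [hΦf, hΦf']; omega
  exact absurd (hf f' (Finset.mem_univ _)) (not_le.mpr hlt)
end

section
/- Every graph with maximum degree D admits a partition of its vertex set into floor(D/2)+1 parts such that each part induces a subgraph of maximum degree at most 1. -/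
/-- Gerencsér's theorem: every graph of maximum degree D has a 1-defective
(⌊D/2⌋+1)-coloring. -/
theorem stmt2 {V : Type*} [Fintype V] (G : SimpleGraph V) [DecidableRel G.Adj]
    (D : ℕ) (hD : ∀ v, G.degree v ≤ D) :
    ∃ f : V → Fin (D / 2 + 1), ∀ v,
      ((G.neighborFinset v).filter (fun u => f u = f v)).card ≤ 1 := by
  classical
  obtain ⟨f, hf⟩ := Finite.exists_min (fun f : V → Fin (D / 2 + 1) =>
    ∑ a, ((G.neighborFinset a).filter (fun u => f u = f a)).card)
  refine ⟨f, fun v => ?_⟩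
  by_contra hv
  push_neg at hv
  -- find a color j with at most one neighbor of v colored j
  have hsum : ∑ j : Fin (D / 2 + 1),
      ((G.neighborFinset v).filter (fun u => f u = j)).card = G.degree v := by
    rw [← SimpleGraph.card_neighborFinset_eq_degree]
    exact (Finset.card_eq_sum_card_fiberwise (fun a _ => Finset.mem_univ (f a))).symm
  have hex : ∃ j : Fin (D / 2 + 1),
      ((G.neighborFinset v).filter (fun u => f u = j)).card ≤ 1 := by
    by_contra h
    push_neg at h
    have h2 : ∑ _j : Fin (D / 2 + 1), 2 ≤
        ∑ j : Fin (D / 2 + 1), ((G.neighborFinset v).filter (fun u => f u = j)).card :=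
      Finset.sum_le_sum fun j _ => h j
    rw [hsum] at h2
    simp only [Finset.sum_const, Finset.card_univ, Fintype.card_fin, smul_eq_mul] at h2
    have hd := hD v
    omega
  obtain ⟨j, hj⟩ := hex
  set g := Function.update f v j with hg
  have hgv : g v = j := Function.update_self v j f
  have hgne : ∀ u, u ≠ v → g u = f u := fun u hu => Function.update_of_ne hu j f
  -- key local equation for every a ≠ v
  have key : ∀ a, a ≠ v →
      ((G.neighborFinset a).filter (fun u => g u = g a)).card
        + (if v ∈ G.neighborFinset a ∧ f v = f a then 1 else 0)
      = ((G.neighborFinset a).filter (fun u => f u = f a)).card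
        + (if v ∈ G.neighborFinset a ∧ j = f a then 1 else 0) := by
    intro a ha
    have hga : g a = f a := hgne a ha
    by_cases hvN : v ∈ G.neighborFinset a
    · have hN : G.neighborFinset a = insert v ((G.neighborFinset a).erase v) :=
        (Finset.insert_erase hvN).symm
      have hvne : v ∉ (G.neighborFinset a).erase v := Finset.notMem_erase v _
      have hfe : ((G.neighborFinset a).erase v).filter (fun u => g u = f a)
          = ((G.neighborFinset a).erase v).filter (fun u => f u = f a) := by
        apply Finset.filter_congr
        intro u hu
        simp [hgne u (Finset.ne_of_mem_erase hu)]
      have hvf1 : v ∉ ((G.neighborFinset a).erase v).filter (fun u => f u = f a) :=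
        fun h => hvne (Finset.mem_filter.mp h).1
      simp only [hvN, true_and]
      rw [hga, hN, Finset.filter_insert, Finset.filter_insert, hfe]
      simp only [hgv]
      split_ifs with h1 h2 h2 <;>
        simp [Finset.card_insert_of_notMem hvf1]
    · have hfe : (G.neighborFinset a).filter (fun u => g u = g a)
          = (G.neighborFinset a).filter (fun u => f u = f a) := by
        apply Finset.filter_congr
        intro u hu
        have : u ≠ v := fun h => hvN (h ▸ hu)
        simp [hga, hgne u this]
      simp [hfe, hvN]
  -- sum the key equation over all a ≠ v
  have hkey : ∑ a ∈ Finset.univ.erase v,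
        (((G.neighborFinset a).filter (fun u => g u = g a)).card
          + (if v ∈ G.neighborFinset a ∧ f v = f a then 1 else 0))
      = ∑ a ∈ Finset.univ.erase v,
        (((G.neighborFinset a).filter (fun u => f u = f a)).card
          + (if v ∈ G.neighborFinset a ∧ j = f a then 1 else 0)) :=
    Finset.sum_congr rfl fun a ha => key a (Finset.ne_of_mem_erase ha)
  -- indicator sums are neighborhood counts
  have hind : ∀ c : Fin (D / 2 + 1),
      (∑ a ∈ Finset.univ.erase v, if v ∈ G.neighborFinset a ∧ c = f a then 1 else 0)
      = ((G.neighborFinset v).filter (fun u => f u = c)).card := by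
    intro c
    rw [show (∑ a ∈ Finset.univ.erase v, if v ∈ G.neighborFinset a ∧ c = f a then 1 else 0)
        = ((Finset.univ.erase v).filter (fun a => v ∈ G.neighborFinset a ∧ c = f a)).card from
      (Finset.card_filter _ _).symm]
    congr 1
    ext a
    simp only [Finset.mem_filter, Finset.mem_erase, Finset.mem_univ, true_and, and_true,
      SimpleGraph.mem_neighborFinset]
    constructor
    · rintro ⟨_, hadj, hc⟩
      exact ⟨hadj.symm, hc.symm⟩
    · rintro ⟨hadj, hc⟩
      exact ⟨hadj.ne', hadj.symm, hc.symm⟩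
  -- the value at v for g
  have htgv : ((G.neighborFinset v).filter (fun u => g u = g v)).card
      = ((G.neighborFinset v).filter (fun u => f u = j)).card := by
    apply congrArg Finset.card
    apply Finset.filter_congr
    intro u hu
    have hune : u ≠ v := ((G.mem_neighborFinset v u).mp hu).ne'
    simp [hgv, hgne u hune]
  -- splitting the total sums
  have hsplitg : ∑ a, ((G.neighborFinset a).filter (fun u => g u = g a)).card
      = (∑ a ∈ Finset.univ.erase v, ((G.neighborFinset a).filter (fun u => g u = g a)).card)
        + ((G.neighborFinset v).filter (fun u => g u = g v)).card :=
    (Finset.sum_erase_add _ _ (Finset.mem_univ v)).symm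
  have hsplitf : ∑ a, ((G.neighborFinset a).filter (fun u => f u = f a)).card
      = (∑ a ∈ Finset.univ.erase v, ((G.neighborFinset a).filter (fun u => f u = f a)).card)
        + ((G.neighborFinset v).filter (fun u => f u = f v)).card :=
    (Finset.sum_erase_add _ _ (Finset.mem_univ v)).symm
  rw [Finset.sum_add_distrib, Finset.sum_add_distrib, hind (f v), hind j] at hkey
  have hmin := hf g
  rw [hsplitg, hsplitf, htgv] at hmin
  omega
end

section
/- Let G be a graph with a c-coloring phi, let S be a proper nonempty subset of V(G), and suppose the graph G^phi obtained by contracting S according to the coloring phi restricted to S admits a c^phi-coloring psi. Then the union of phi restricted to S and psi restricted to V(G)\S is a c-coloring of G. Equivalently: if S is a proper nonempty subset of V(G), phi is a c-coloring of G[S], and G is not c-colorable, then G^phi is not c^phi-colorable. -/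
open scoped Classical

/-- A c-coloring of G. -/
def CColorable {V : Type*} (G : SimpleGraph V) (c1 c2 : V → ℤ) : Prop :=
  ∃ f : V → Fin 2, ∀ v,
    ((G.neighborSet v ∩ {u | f u = f v}).ncard : ℤ) ≤ if f v = 0 then c1 v else c2 v

/-- N_i: vertices outside S having a neighbor in S of color i (color 1 is `0 : Fin 2`,
color 2 is `1 : Fin 2`). -/
def Nset {V : Type*} (G : SimpleGraph V) (S : Set V) (phi : V → Fin 2) (i : Fin 2) :
    Set V :=
  {u | u ∉ S ∧ ∃ s ∈ S, G.Adj u s ∧ phi s = i}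

/-- The graph G^φ obtained from G by deleting S and adding vertices y₁ = inr 0
and y₂ = inr 1 with yᵢ adjacent to Nᵢ, and y₁y₂ an edge when both N₁, N₂ are nonempty. -/
def Gphi {V : Type*} (G : SimpleGraph V) (S : Set V) (phi : V → Fin 2) :
    SimpleGraph ({v : V // v ∉ S} ⊕ Fin 2) where
  Adj x y :=
    match x, y with
    | Sum.inl u, Sum.inl w => G.Adj u.1 w.1
    | Sum.inl u, Sum.inr i => u.1 ∈ Nset G S phi i
    | Sum.inr i, Sum.inl u => u.1 ∈ Nset G S phi i
    | Sum.inr i, Sum.inr j =>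
        i ≠ j ∧ (Nset G S phi 0).Nonempty ∧ (Nset G S phi 1).Nonempty
  symm := by
    constructor
    rintro (u | i) (w | j) h
    · exact G.symm.symm _ _ h
    · exact h
    · exact h
    · exact ⟨h.1.symm, h.2⟩
  loopless := by
    constructor
    rintro (u | i) h
    · exact G.loopless.irrefl u.1 h
    · exact h.1 rfl

/-- First coordinate of c^φ: c₁ on old vertices, 0 on y₁, -1 on y₂. -/
noncomputable def cap1phi {V : Type*} (G : SimpleGraph V) (S : Set V) (phi : V → Fin 2)
    (c1 : V → ℤ) : ({v : V // v ∉ S} ⊕ Fin 2) → ℤ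
  | Sum.inl u => c1 u.1
  | Sum.inr i => if i = 0 then 0 else -1

/-- Second coordinate of c^φ: c₂ on old vertices, 0 on y₂, and on y₁ it is -1 when
N₂ = ∅ (the case c^φ(y₁) = (0,-1)) and 3 otherwise (the case c^φ(y₁) = (0,3)). -/
noncomputable def cap2phi {V : Type*} (G : SimpleGraph V) (S : Set V) (phi : V → Fin 2)
    (c2 : V → ℤ) : ({v : V // v ∉ S} ⊕ Fin 2) → ℤ
  | Sum.inl u => c2 u.1
  | Sum.inr i => if i = 0 then (if Nset G S phi 1 = ∅ then -1 else 3) else 0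

/-- Lemma 5 (first assertion): if S is a proper nonempty subset of V(G), φ is a
c-coloring of G[S], and G is not c-colorable, then G^φ is not c^φ-colorable. -/
theorem stmt10 {V : Type*} [Fintype V] (G : SimpleGraph V) (c1 c2 : V → ℤ)
    (hc1 : ∀ v, -1 ≤ c1 v ∧ c1 v ≤ 1) (hc2 : ∀ v, -1 ≤ c2 v ∧ c2 v ≤ 3)
    (S : Set V) (hS1 : S.Nonempty) (hS2 : S ≠ Set.univ)
    (phi : V → Fin 2)
    (hphi : ∀ v ∈ S,
      ((G.neighborSet v ∩ S ∩ {u | phi u = phi v}).ncard : ℤ) ≤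
        if phi v = 0 then c1 v else c2 v)
    (hG : ¬ CColorable G c1 c2) :
    ¬ CColorable (Gphi G S phi) (cap1phi G S phi c1) (cap2phi G S phi c2) := by
  classical
  rintro ⟨psi, hpsi⟩
  apply hG
  have fin2 : ∀ x : Fin 2, x = 0 ∨ x = 1 := by decide
  -- ψ(y₂) = 1
  have hy2 : psi (Sum.inr 1) = 1 := by
    rcases fin2 (psi (Sum.inr 1)) with h | h
    · exfalso
      have h1 := hpsi (Sum.inr 1)
      rw [if_pos h] at h1
      simp only [cap1phi] at h1
      norm_num at h1
      omega
    · exact h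
  -- y₂'s like-colored neighbor count is 0
  have hc2' : ((((Gphi G S phi).neighborSet (Sum.inr 1)) ∩ {x | psi x = 1}).ncard : ℤ) ≤ 0 := by
    have h1 := hpsi (Sum.inr 1)
    rw [hy2] at h1
    simpa only [cap2phi, if_neg (by decide : ¬(1 : Fin 2) = 0)] using h1
  -- no vertex of N₂ has color 1
  have hnot1 : ∀ (u : {v : V // v ∉ S}), u.1 ∈ Nset G S phi 1 →
      psi (Sum.inl u) ≠ 1 := by
    intro u hu hmem
    have hx : Sum.inl u ∈ ((Gphi G S phi).neighborSet (Sum.inr 1)) ∩ {x | psi x = 1} :=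
      ⟨hu, hmem⟩
    have hpos : 0 < (((Gphi G S phi).neighborSet (Sum.inr 1)) ∩ {x | psi x = 1}).ncard :=
      (Set.ncard_pos (Set.toFinite _)).mpr ⟨_, hx⟩
    omega
  -- no vertex of N₁ has color 0
  have hnot0 : ∀ (u : {v : V // v ∉ S}), u.1 ∈ Nset G S phi 0 →
      psi (Sum.inl u) ≠ 0 := by
    intro u hu hmem
    have hN0 : (Nset G S phi 0).Nonempty := ⟨u.1, hu⟩
    have hy1 : psi (Sum.inr 0) = 0 := by
      rcases fin2 (psi (Sum.inr 0)) with h | h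
      · exact h
      · exfalso
        by_cases hN1 : Nset G S phi 1 = ∅
        · have h1 := hpsi (Sum.inr 0)
          rw [if_neg (by rw [h]; decide)] at h1
          have hcap : cap2phi G S phi c2 (Sum.inr 0) = -1 := by
            simp [cap2phi, hN1]
          rw [hcap] at h1
          omega
        · have hadj : (Gphi G S phi).Adj (Sum.inr 1) (Sum.inr 0) :=
            ⟨by decide, hN0, Set.nonempty_iff_ne_empty.mpr hN1⟩
          have hx : Sum.inr 0 ∈ ((Gphi G S phi).neighborSet (Sum.inr 1)) ∩ {x | psi x = 1} :=
            ⟨hadj, h⟩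
          have hpos : 0 < (((Gphi G S phi).neighborSet (Sum.inr 1)) ∩ {x | psi x = 1}).ncard :=
            (Set.ncard_pos (Set.toFinite _)).mpr ⟨_, hx⟩
          omega
    have h1 := hpsi (Sum.inr 0)
    rw [hy1] at h1
    have hcap : cap1phi G S phi c1 (Sum.inr 0) = 0 := by simp [cap1phi]
    rw [if_pos rfl, hcap] at h1
    have hx : Sum.inl u ∈ ((Gphi G S phi).neighborSet (Sum.inr 0)) ∩ {x | psi x = 0} :=
      ⟨hu, hmem⟩
    have hpos : 0 < (((Gphi G S phi).neighborSet (Sum.inr 0)) ∩ {x | psi x = 0}).ncard :=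
      (Set.ncard_pos (Set.toFinite _)).mpr ⟨_, hx⟩
    omega
  have hnot : ∀ (i : Fin 2) (u : {v : V // v ∉ S}), u.1 ∈ Nset G S phi i →
      psi (Sum.inl u) ≠ i := by
    intro i
    rcases fin2 i with rfl | rfl
    · exact hnot0
    · exact hnot1
  -- combined coloring
  set f : V → Fin 2 := fun v => if h : v ∈ S then phi v else psi (Sum.inl ⟨v, h⟩) with hfdef
  refine ⟨f, ?_⟩
  intro v
  by_cases hv : v ∈ S
  · have hfv : f v = phi v := dif_pos hv
    have hsub : G.neighborSet v ∩ {u | f u = f v} ⊆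
        G.neighborSet v ∩ S ∩ {u | phi u = phi v} := by
      rintro u ⟨hadj, hfu⟩
      by_cases hu : u ∈ S
      · have hfu' : f u = phi u := dif_pos hu
        refine ⟨⟨hadj, hu⟩, ?_⟩
        show phi u = phi v
        rw [← hfu', ← hfv]
        exact hfu
      · exfalso
        have hfu' : f u = psi (Sum.inl ⟨u, hu⟩) := dif_neg hu
        have hmem : u ∈ Nset G S phi (phi v) := ⟨hu, v, hv, G.adj_symm hadj, rfl⟩
        exact hnot (phi v) ⟨u, hu⟩ hmem (by rw [← hfu', hfu, hfv])
    have hle : (G.neighborSet v ∩ {u | f u = f v}).ncard ≤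
        (G.neighborSet v ∩ S ∩ {u | phi u = phi v}).ncard :=
      Set.ncard_le_ncard hsub (Set.toFinite _)
    rw [hfv] at hle ⊢
    exact le_trans (by exact_mod_cast hle) (hphi v hv)
  · have hfv : f v = psi (Sum.inl ⟨v, hv⟩) := dif_neg hv
    have hAS : ∀ u ∈ G.neighborSet v ∩ {u | f u = f v}, u ∉ S := by
      rintro u ⟨hadj, hfu⟩ hu
      have hfu' : f u = phi u := dif_pos hu
      have hmem : v ∈ Nset G S phi (phi u) := ⟨hv, u, hu, hadj, rfl⟩
      exact hnot (phi u) ⟨v, hv⟩ hmem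
        (hfv.symm.trans ((show f u = f v from hfu).symm.trans hfu'))
    have hle : (G.neighborSet v ∩ {u | f u = f v}).ncard ≤
        (((Gphi G S phi).neighborSet (Sum.inl ⟨v, hv⟩)) ∩
          {x | psi x = psi (Sum.inl ⟨v, hv⟩)}).ncard := by
      apply Set.ncard_le_ncard_of_injOn
        (fun u => if h : u ∈ S then Sum.inr 0 else Sum.inl ⟨u, h⟩)
      · intro u hu
        have hus := hAS u hu
        obtain ⟨hadj, hfu⟩ := hu
        simp only [dif_neg hus]
        refine ⟨hadj, ?_⟩
        have hfu' : f u = psi (Sum.inl ⟨u, hus⟩) := dif_neg hus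
        show psi (Sum.inl ⟨u, hus⟩) = psi (Sum.inl ⟨v, hv⟩)
        rw [← hfu', hfu, hfv]
      · intro a ha b hb hab
        simp only [dif_neg (hAS a ha), dif_neg (hAS b hb), Sum.inl.injEq,
          Subtype.mk.injEq] at hab
        exact hab
    have hB := hpsi (Sum.inl ⟨v, hv⟩)
    simp only [cap1phi, cap2phi] at hB
    rw [hfv] at hle ⊢
    exact le_trans (by exact_mod_cast hle) hB
end

section
/- No (1,3)-critical graph contains two adjacent vertices both of degree 2. -/
/-- G is (1,3)-colorable. -/
def Colorable13 {V : Type*} (G : SimpleGraph V) : Prop :=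
  ∃ f : V → Bool,
    (∀ v, f v = true → (G.neighborSet v ∩ {u | f u = true}).ncard ≤ 1) ∧
    (∀ v, f v = false → (G.neighborSet v ∩ {u | f u = false}).ncard ≤ 3)

/-- G is (1,3)-critical. -/
def Critical13 {V : Type*} (G : SimpleGraph V) : Prop :=
  ¬ Colorable13 G ∧ ∀ H : G.Subgraph, H ≠ ⊤ → Colorable13 H.coe

lemma ncard_le_two_of_subset_pair {α : Type*} {s : Set α} {a b : α} (h : s ⊆ {a, b}) :
    s.ncard ≤ 2 := by
  have hfin : ({a, b} : Set α).Finite := (Set.finite_singleton b).insert a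
  calc s.ncard ≤ ({a, b} : Set α).ncard := Set.ncard_le_ncard h hfin
    _ ≤ 2 := by
      rcases eq_or_ne a b with rfl | hab
      · simp
      · rw [Set.ncard_pair hab]

lemma ncard_le_one_of_subset_singleton {α : Type*} {s : Set α} {a : α} (h : s ⊆ {a}) :
    s.ncard ≤ 1 := by
  calc s.ncard ≤ ({a} : Set α).ncard := Set.ncard_le_ncard h (Set.finite_singleton a)
    _ = 1 := Set.ncard_singleton a

/-- No (1,3)-critical graph contains two adjacent vertices both of degree 2. -/
theorem stmt13 {V : Type*} [Fintype V] (G : SimpleGraph V) (h : Critical13 G) :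
    ¬ ∃ u v : V, G.Adj u v ∧ (G.neighborSet u).ncard = 2 ∧
      (G.neighborSet v).ncard = 2 := by
  classical
  rintro ⟨u, v, huv, hu2, hv2⟩
  -- extract the other neighbors x of u and y of v
  obtain ⟨x, hxv, hNu⟩ : ∃ x, x ≠ v ∧ G.neighborSet u = {v, x} := by
    obtain ⟨a, b, hab, hs⟩ := Set.ncard_eq_two.mp hu2
    have hv : v ∈ G.neighborSet u := huv
    rw [hs] at hv
    simp only [Set.mem_insert_iff, Set.mem_singleton_iff] at hv
    rcases hv with rfl | rfl
    · exact ⟨b, hab.symm, hs⟩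
    · exact ⟨a, hab, by rw [hs, Set.pair_comm]⟩
  obtain ⟨y, hyu, hNv⟩ : ∃ y, y ≠ u ∧ G.neighborSet v = {u, y} := by
    obtain ⟨a, b, hab, hs⟩ := Set.ncard_eq_two.mp hv2
    have hv : u ∈ G.neighborSet v := huv.symm
    rw [hs] at hv
    simp only [Set.mem_insert_iff, Set.mem_singleton_iff] at hv
    rcases hv with rfl | rfl
    · exact ⟨b, hab.symm, hs⟩
    · exact ⟨a, hab, by rw [hs, Set.pair_comm]⟩
  have hux : G.Adj u x := by
    have : x ∈ G.neighborSet u := by rw [hNu]; exact Or.inr rfl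
    exact this
  have hvy : G.Adj v y := by
    have : y ∈ G.neighborSet v := by rw [hNv]; exact Or.inr rfl
    exact this
  have hxu : x ≠ u := hux.ne'
  have hyv : y ≠ v := hvy.ne'
  have hvu : v ≠ u := huv.ne'
  -- the subgraph obtained by deleting all edges at u
  let H : G.Subgraph :=
    { verts := Set.univ
      Adj := fun a b => G.Adj a b ∧ a ≠ u ∧ b ≠ u
      adj_sub := fun hab => hab.1
      edge_vert := fun _ => Set.mem_univ _
      symm := ⟨fun a b hab => ⟨hab.1.symm, hab.2.2, hab.2.1⟩⟩ }
  have hHadj : ∀ a b, H.Adj a b ↔ G.Adj a b ∧ a ≠ u ∧ b ≠ u := fun a b => Iff.rfl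
  have hHne : H ≠ ⊤ := by
    intro he
    have : H.Adj u v := by rw [he]; exact SimpleGraph.Subgraph.top_adj.mpr huv
    exact this.2.1 rfl
  obtain ⟨f, hf1, hf3⟩ := h.2 H hHne
  set F : V → Bool := fun w => f ⟨w, Set.mem_univ w⟩ with hFdef
  -- transfer the coloring conditions from H.coe to V
  have key : ∀ (w : V) (b : Bool),
      ({z : V | H.Adj w z} ∩ {z | F z = b}) =
        Subtype.val '' (H.coe.neighborSet ⟨w, Set.mem_univ w⟩ ∩ {z | f z = b}) := by
    intro w b
    ext z
    constructor
    · rintro ⟨hz1, hz2⟩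
      exact ⟨⟨z, Set.mem_univ z⟩, ⟨hz1, hz2⟩, rfl⟩
    · rintro ⟨⟨z', hz'⟩, ⟨hm, hb⟩, rfl⟩
      exact ⟨hm, hb⟩
  have hF1 : ∀ w, F w = true → ({z : V | H.Adj w z} ∩ {z | F z = true}).ncard ≤ 1 := by
    intro w hw
    rw [key w true, Set.ncard_image_of_injective _ Subtype.val_injective]
    exact hf1 ⟨w, Set.mem_univ w⟩ hw
  have hF3 : ∀ w, F w = false → ({z : V | H.Adj w z} ∩ {z | F z = false}).ncard ≤ 3 := by
    intro w hw
    rw [key w false, Set.ncard_image_of_injective _ Subtype.val_injective]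
    exact hf3 ⟨w, Set.mem_univ w⟩ hw
  -- the recoloring
  set B3 : Prop := F x = false ∧ F v = true ∧ F y = true with hB3def
  set g : V → Bool := fun z => if z = u then !(F x) else if z = v ∧ B3 then false else F z
    with hgdef
  have hgu : g u = !(F x) := by simp [hgdef]
  have hgx : g x = F x := by simp [hgdef, hxu, hxv]
  have hgy : g y = F y := by simp [hgdef, hyu, hyv]
  have hgother : ∀ z, z ≠ u → z ≠ v → g z = F z := by
    intro z hzu hzv; simp [hgdef, hzu, hzv]
  have hgvB3 : B3 → g v = false := by
    intro hb
    show (if v = u then !(F x) else if v = v ∧ B3 then false else F v) = false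
    rw [if_neg hvu, if_pos ⟨rfl, hb⟩]
  have hgvnB3 : ¬ B3 → g v = F v := by
    intro hb
    show (if v = u then !(F x) else if v = v ∧ B3 then false else F v) = F v
    rw [if_neg hvu, if_neg (fun hc => hb hc.2)]
  apply h.1
  refine ⟨g, ?_, ?_⟩
  · -- true condition
    intro w hw
    by_cases hwu : w = u
    · have hFx : F x = false := by
        rw [hwu, hgu] at hw; simpa using hw
      rw [hwu]
      apply ncard_le_one_of_subset_singleton (a := v)
      rintro z ⟨hz1, hz2⟩
      have hz2' : g z = true := hz2
      have hzm : z ∈ ({v, x} : Set V) := hNu ▸ hz1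
      simp only [Set.mem_insert_iff, Set.mem_singleton_iff] at hzm
      rcases hzm with h' | h'
      · exact h'
      · exfalso; rw [h', hgx, hFx] at hz2'; simp at hz2'
    · by_cases hwv : w = v
      · rw [hwv] at hw
        have hnB3 : ¬ B3 := by
          intro hb
          rw [hgvB3 hb] at hw; simp at hw
        have hFv : F v = true := by rw [← hgvnB3 hnB3]; exact hw
        rw [hwv]
        by_cases hFx : F x = true
        · -- u is colored false, so the true neighbors of v are within {y}
          apply ncard_le_one_of_subset_singleton (a := y)
          rintro z ⟨hz1, hz2⟩
          have hz2' : g z = true := hz2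
          have hzm : z ∈ ({u, y} : Set V) := hNv ▸ hz1
          simp only [Set.mem_insert_iff, Set.mem_singleton_iff] at hzm
          rcases hzm with h' | h'
          · exfalso; rw [h', hgu, hFx] at hz2'; simp at hz2'
          · exact h'
        · have hFx' : F x = false := by simpa using hFx
          have hFy : F y = false := by
            by_contra hy
            exact hnB3 ⟨hFx', hFv, by simpa using hy⟩
          apply ncard_le_one_of_subset_singleton (a := u)
          rintro z ⟨hz1, hz2⟩
          have hz2' : g z = true := hz2
          have hzm : z ∈ ({u, y} : Set V) := hNv ▸ hz1
          simp only [Set.mem_insert_iff, Set.mem_singleton_iff] at hzm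
          rcases hzm with h' | h'
          · exact h'
          · exfalso; rw [h', hgy, hFy] at hz2'; simp at hz2'
      · -- generic vertex: reduce to the H-coloring
        have hFw : F w = true := by rw [← hgother w hwu hwv]; exact hw
        have hsub : G.neighborSet w ∩ {z | g z = true} ⊆
            {z : V | H.Adj w z} ∩ {z | F z = true} := by
          rintro z ⟨hz1, hz2⟩
          have hz2' : g z = true := hz2
          have hz1' : G.Adj w z := hz1
          have hzu : z ≠ u := by
            intro hzu
            have hwm : w ∈ G.neighborSet u := (hzu ▸ hz1'.symm)
            rw [hNu] at hwm
            simp only [Set.mem_insert_iff, Set.mem_singleton_iff] at hwm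
            rcases hwm with h' | h'
            · exact hwv h'
            · rw [hzu, hgu] at hz2'
              have hx : F x = false := by simpa using hz2'
              rw [h', hx] at hFw; simp at hFw
          refine ⟨⟨hz1', hwu, hzu⟩, ?_⟩
          show F z = true
          by_cases hzv : z = v
          · by_cases hb : B3
            · exfalso; rw [hzv, hgvB3 hb] at hz2'; simp at hz2'
            · rw [hzv, ← hgvnB3 hb, ← hzv]; exact hz2'
          · rw [← hgother z hzu hzv]; exact hz2'
        calc (G.neighborSet w ∩ {z | g z = true}).ncard
            ≤ ({z : V | H.Adj w z} ∩ {z | F z = true}).ncard :=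
              Set.ncard_le_ncard hsub (Set.toFinite _)
          _ ≤ 1 := hF1 w hFw
  · -- false condition
    intro w hw
    by_cases hwu : w = u
    · rw [hwu]
      have hsub : G.neighborSet u ∩ {z | g z = false} ⊆ ({v, x} : Set V) := by
        rintro z ⟨hz1, _⟩; exact hNu ▸ hz1
      exact le_trans (ncard_le_two_of_subset_pair hsub) (by norm_num)
    · by_cases hwv : w = v
      · rw [hwv]
        have hsub : G.neighborSet v ∩ {z | g z = false} ⊆ ({u, y} : Set V) := by
          rintro z ⟨hz1, _⟩; exact hNv ▸ hz1
        exact le_trans (ncard_le_two_of_subset_pair hsub) (by norm_num)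
      · have hFw : F w = false := by rw [← hgother w hwu hwv]; exact hw
        have hsub : G.neighborSet w ∩ {z | g z = false} ⊆
            {z : V | H.Adj w z} ∩ {z | F z = false} := by
          rintro z ⟨hz1, hz2⟩
          have hz2' : g z = false := hz2
          have hz1' : G.Adj w z := hz1
          have hzu : z ≠ u := by
            intro hzu
            have hwm : w ∈ G.neighborSet u := (hzu ▸ hz1'.symm)
            rw [hNu] at hwm
            simp only [Set.mem_insert_iff, Set.mem_singleton_iff] at hwm
            rcases hwm with h' | h'
            · exact hwv h'
            · rw [hzu, hgu] at hz2'
              have hx : F x = true := by simpa using hz2'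
              rw [h', hx] at hFw; simp at hFw
          refine ⟨⟨hz1', hwu, hzu⟩, ?_⟩
          show F z = false
          by_cases hzv : z = v
          · by_cases hb : B3
            · -- then w ∈ {u, y}, so w = y, but F y = true while F w = false
              exfalso
              have hwm : w ∈ G.neighborSet v := (hzv ▸ hz1'.symm)
              rw [hNv] at hwm
              simp only [Set.mem_insert_iff, Set.mem_singleton_iff] at hwm
              rcases hwm with h' | h'
              · exact hwu h'
              · rw [h', hb.2.2] at hFw; simp at hFw
            · rw [hzv, ← hgvnB3 hb, ← hzv]; exact hz2'
          · rw [← hgother z hzu hzv]; exact hz2'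
        calc (G.neighborSet w ∩ {z | g z = false}).ncard
            ≤ ({z : V | H.Adj w z} ∩ {z | F z = false}).ncard :=
              Set.ncard_le_ncard hsub (Set.toFinite _)
          _ ≤ 3 := hF3 w hFw
end
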